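/- arXiv:1501.02607 — 5 statements merged into one kernel-verified Lean document; each statement's English description precedes it below -/
import Mathlib

section
/- Let G : Set S × Set S → Set S be completely additive in the product. Fix Y ⊆ S and let F(X) := G(X, Y). Then for every s ∈ S: s belongs to the least fixed point of F if and only if there exist elements t₁, ..., t_k ∈ S with t_k = s such that t₁ ∈ G(∅, Q) for some quasi-atom Q of Y (i.e., Q = ∅ or Q = {y} for some y ∈ Y), and for all 1 ≤ i < k, t_{i+1} ∈ G({t_i}, ∅). -/
def CompletelyAdditive2 {S : Type} (G : Set S → Set S → Set S) : Prop :=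
  ∀ (ι : Type) [Nonempty ι] (A B : ι → Set S),
    G (⋃ i, A i) (⋃ i, B i) = ⋃ i, G (A i) (B i)

def setLfp {S : Type} (F : Set S → Set S) : Set S :=
  ⋂₀ {X : Set S | F X ⊆ X}

lemma ca2_union {S : Type} {G : Set S → Set S → Set S} (h : CompletelyAdditive2 G)
    (X1 X2 Y1 Y2 : Set S) : G (X1 ∪ X2) (Y1 ∪ Y2) = G X1 Y1 ∪ G X2 Y2 := by
  have := h Bool (fun b => cond b X1 X2) (fun b => cond b Y1 Y2)
  rw [← Set.union_eq_iUnion, ← Set.union_eq_iUnion] at this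
  rw [this, Set.union_eq_iUnion]
  exact Set.iUnion_congr (fun b => by cases b <;> rfl)

lemma ca2_mono {S : Type} {G : Set S → Set S → Set S} (h : CompletelyAdditive2 G)
    {A B X Y : Set S} (hA : A ⊆ X) (hB : B ⊆ Y) : G A B ⊆ G X Y := by
  have key : G (A ∪ X) (B ∪ Y) = G A B ∪ G X Y := ca2_union h A X B Y
  rw [Set.union_eq_self_of_subset_left hA, Set.union_eq_self_of_subset_left hB] at key
  rw [key]
  exact Set.subset_union_left

/-- quasi-atom from an option -/
def qa {S : Type} {X : Set S} : Option X → Set S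
  | none => ∅
  | some a => {a.1}

lemma qa_iUnion {S : Type} (X : Set S) : (⋃ o : Option X, qa o) = X := by
  ext x
  simp only [Set.mem_iUnion]
  constructor
  · rintro ⟨o, ho⟩
    cases o with
    | none => exact absurd ho (by simp [qa])
    | some a => simp [qa] at ho; exact ho ▸ a.2
  · intro hx; exact ⟨some ⟨x, hx⟩, by simp [qa]⟩

lemma ca2_atom {S : Type} {G : Set S → Set S → Set S} (h : CompletelyAdditive2 G)
    {X Y : Set S} {x : S} (hx : x ∈ G X Y) :
    ∃ A B : Set S, (A = ∅ ∨ ∃ a ∈ X, A = {a}) ∧ (B = ∅ ∨ ∃ b ∈ Y, B = {b}) ∧ x ∈ G A B := by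
  have key := h (Option X × Option Y) (fun p => qa p.1) (fun p => qa p.2)
  have hU1 : (⋃ p : Option X × Option Y, qa p.1) = X := by
    ext x
    simp only [Set.mem_iUnion]
    constructor
    · rintro ⟨p, hp⟩
      have : x ∈ ⋃ o : Option X, qa o := Set.mem_iUnion.mpr ⟨p.1, hp⟩
      rwa [qa_iUnion] at this
    · intro hx; exact ⟨(some ⟨x, hx⟩, none), by simp [qa]⟩
  have hU2 : (⋃ p : Option X × Option Y, qa p.2) = Y := by
    ext x
    simp only [Set.mem_iUnion]
    constructor
    · rintro ⟨p, hp⟩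
      have : x ∈ ⋃ o : Option Y, qa o := Set.mem_iUnion.mpr ⟨p.2, hp⟩
      rwa [qa_iUnion] at this
    · intro hx; exact ⟨(none, some ⟨x, hx⟩), by simp [qa]⟩
  rw [hU1, hU2] at key
  rw [key, Set.mem_iUnion] at hx
  obtain ⟨⟨oa, ob⟩, hp⟩ := hx
  refine ⟨qa oa, qa ob, ?_, ?_, hp⟩
  · cases oa with
    | none => left; rfl
    | some a => right; exact ⟨a.1, a.2, rfl⟩
  · cases ob with
    | none => left; rfl
    | some b => right; exact ⟨b.1, b.2, rfl⟩

theorem lfp_characterization_of_completelyAdditive2 {S : Type}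
    (G : Set S → Set S → Set S) (h : CompletelyAdditive2 G)
    (Y : Set S) (s : S) :
    s ∈ setLfp (fun X => G X Y) ↔
      ∃ (k : ℕ) (t : ℕ → S), 1 ≤ k ∧ t k = s ∧
        (∃ Q : Set S, (Q = ∅ ∨ ∃ y ∈ Y, Q = {y}) ∧ t 1 ∈ G ∅ Q) ∧
        (∀ i, 1 ≤ i → i < k → t (i + 1) ∈ G {t i} ∅) := by
  constructor
  · -- forward: lfp ⊆ R
    intro hs
    set R : Set S := {s | ∃ (k : ℕ) (t : ℕ → S), 1 ≤ k ∧ t k = s ∧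
        (∃ Q : Set S, (Q = ∅ ∨ ∃ y ∈ Y, Q = {y}) ∧ t 1 ∈ G ∅ Q) ∧
        (∀ i, 1 ≤ i → i < k → t (i + 1) ∈ G {t i} ∅)} with hR
    have hclosed : G R Y ⊆ R := by
      intro x hx
      obtain ⟨A, B, hA, hB, hxAB⟩ := ca2_atom h hx
      cases hA with
      | inl hAe =>
          subst hAe
          exact ⟨1, fun _ => x, le_refl 1, rfl, ⟨B, hB, hxAB⟩,
            fun i h1 h2 => absurd (lt_of_le_of_lt h1 h2) (lt_irrefl 1)⟩
      | inr hAs =>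
          obtain ⟨a, haR, rfl⟩ := hAs
          -- split G {a} B = G {a} ∅ ∪ G ∅ B
          have hsplit : G {a} B = G {a} ∅ ∪ G ∅ B := by
            have := ca2_union h {a} ∅ ∅ B
            simpa using this
          rw [hsplit] at hxAB
          cases hxAB with
          | inr hx2 =>
              exact ⟨1, fun _ => x, le_refl 1, rfl, ⟨B, hB, hx2⟩,
                fun i h1 h2 => absurd (lt_of_le_of_lt h1 h2) (lt_irrefl 1)⟩
          | inl hx1 =>
              obtain ⟨k, t, hk, htk, hinit, hstep⟩ := haR
              refine ⟨k + 1, fun i => if i ≤ k then t i else x, le_trans hk (Nat.le_succ k),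
                by simp, ?_, ?_⟩
              · simpa [hk] using hinit
              · intro i h1 h2
                rcases lt_or_eq_of_le (Nat.lt_succ_iff.mp h2) with hlt | heq
                · have : i + 1 ≤ k := hlt
                  simp only [this, le_of_lt hlt, if_true]
                  exact hstep i h1 hlt
                · subst heq
                  simp only [le_refl, if_true, Nat.not_succ_le_self, if_false]
                  rw [htk]
                  exact hx1
    exact hs R hclosed
  · -- backward
    rintro ⟨k, t, hk, hts, ⟨Q, hQ, h1⟩, hstep⟩
    intro X hX
    have hQY : Q ⊆ Y := by
      cases hQ with
      | inl he => subst he; exact Set.empty_subset Y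
      | inr hs => obtain ⟨y, hy, rfl⟩ := hs; simpa using hy
    have main : ∀ i, 1 ≤ i → i ≤ k → t i ∈ X := by
      intro i
      induction i with
      | zero => intro h1 _; exact absurd h1 (by norm_num)
      | succ n ih =>
          intro _ hle
          rcases Nat.eq_zero_or_pos n with rfl | hn
          · exact hX (ca2_mono h (Set.empty_subset X) hQY h1)
          · have htn : t n ∈ X := ih hn (le_trans (Nat.le_succ n) hle)
            have : t (n + 1) ∈ G {t n} ∅ := hstep n hn (Nat.lt_of_succ_le hle)
            exact hX (ca2_mono h (Set.singleton_subset_iff.mpr htn) (Set.empty_subset Y) this)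
    exact hts ▸ main k hk (le_refl k)
end

section
/- Let F : Set S → Set S be completely additive. Define the relation ⇝ on S by t ⇝ t' iff t' ∈ F({t}). Then for every s ∈ S: s ∈ LFP(F) if and only if there exists t₁ ∈ F(∅) such that (t₁, s) is in the reflexive-transitive closure of ⇝. -/
def CompletelyAdditive {S : Type} (F : Set S → Set S) : Prop :=
  ∀ (ι : Type) [Nonempty ι] (Y : ι → Set S), F (⋃ i, Y i) = ⋃ i, F (Y i)

lemma ca_mono {S : Type} {F : Set S → Set S} (h : CompletelyAdditive F)
    {X Y : Set S} (hXY : X ⊆ Y) : F X ⊆ F Y := by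
  have hY : Y = ⋃ b : Bool, (if b then X else Y) := by
    ext x
    simp only [Set.mem_iUnion]
    constructor
    · intro hx; exact ⟨false, by simpa using hx⟩
    · rintro ⟨b, hb⟩; cases b <;> simp_all <;> exact hXY hb
  rw [hY, h Bool]
  intro x hx
  exact Set.mem_iUnion.2 ⟨true, by simpa using hx⟩

lemma ca_decomp {S : Type} {F : Set S → Set S} (h : CompletelyAdditive F)
    (X : Set S) : F X = F ∅ ∪ ⋃ x : X, F {(x : S)} := by
  have hX : X = ⋃ o : Option X, (Option.elim o ∅ (fun x => {(x : S)})) := by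
    ext y
    simp only [Set.mem_iUnion]
    constructor
    · intro hy; exact ⟨some ⟨y, hy⟩, by simp⟩
    · rintro ⟨o, ho⟩
      cases o with
      | none => simp at ho
      | some x => simp at ho; subst ho; exact x.2
  conv_lhs => rw [hX, h (Option X)]
  ext y
  simp only [Set.mem_iUnion, Set.mem_union]
  constructor
  · rintro ⟨o, ho⟩
    cases o with
    | none => exact Or.inl ho
    | some x => exact Or.inr ⟨x, ho⟩
  · rintro (hy | ⟨x, hx⟩)
    · exact ⟨none, hy⟩
    · exact ⟨some x, hx⟩

theorem lfp_completelyAdditive_reachability {S : Type} (F : Set S → Set S)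
    (h : CompletelyAdditive F) (s : S) :
    s ∈ setLfp F ↔
      ∃ t₁ ∈ F ∅, Relation.ReflTransGen (fun a b => b ∈ F {a}) t₁ s := by
  set T : Set S := {s | ∃ t₁ ∈ F ∅, Relation.ReflTransGen (fun a b => b ∈ F {a}) t₁ s} with hT
  constructor
  · intro hs
    have hpre : F T ⊆ T := by
      intro y hy
      rw [ca_decomp h T] at hy
      rcases hy with hy | hy
      · exact ⟨y, hy, Relation.ReflTransGen.refl⟩
      · rw [Set.mem_iUnion] at hy
        rcases hy with ⟨⟨t, t₁, ht₁, hchain⟩, hyt⟩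
        exact ⟨t₁, ht₁, hchain.tail hyt⟩
    exact hs T hpre
  · rintro ⟨t₁, ht₁, hchain⟩
    intro X hX
    induction hchain with
    | refl => exact hX (ca_mono h (Set.empty_subset X) ht₁)
    | tail _ hstep ih =>
        exact hX (ca_mono h (by simpa using ih) hstep)
end

section
/- Let M be a set equipped with a binary relation R, and let R* denote the reflexive-transitive closure of R. A map G : Set M × Set M → Set M restricts to descendants if for every s ∈ M and all X, Y ⊆ M: s ∈ G(X, Y) iff s ∈ G(X ∩ R*[s], Y ∩ R*[s]), where R*[s] = {t : (s,t) ∈ R*}. If G is monotone in both coordinates and restricts to descendants, then the map H(Y) := LFP(X ↦ G(X, Y)) also restricts to descendants, i.e., for all s ∈ M and Y ⊆ M: s ∈ H(Y) iff s ∈ H(Y ∩ R*[s]). -/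
/-- The set of `R*`-descendants of `s` (including `s`). -/
def desc {M : Type} (R : M → M → Prop) (s : M) : Set M :=
  {t | Relation.ReflTransGen R s t}

theorem lfp_restricts_to_descendants {M : Type} (R : M → M → Prop)
    (G : Set M → Set M → Set M)
    (hmono : ∀ X X' Y Y' : Set M, X ⊆ X' → Y ⊆ Y' → G X Y ⊆ G X' Y')
    (hdesc : ∀ (s : M) (X Y : Set M),
      s ∈ G X Y ↔ s ∈ G (X ∩ desc R s) (Y ∩ desc R s)) :
    ∀ (s : M) (Y : Set M),
      s ∈ setLfp (fun X => G X Y) ↔ s ∈ setLfp (fun X => G X (Y ∩ desc R s)) := by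
  -- auxiliary facts about setLfp
  have lfp_le : ∀ (F : Set M → Set M) (X : Set M), F X ⊆ X → setLfp F ⊆ X := by
    intro F X h a ha
    exact ha X h
  have lfp_mono : ∀ (F F' : Set M → Set M), (∀ X, F X ⊆ F' X) → setLfp F ⊆ setLfp F' := by
    intro F F' h a ha X hX
    exact ha X (fun b hb => hX (h X hb))
  have lfp_pre : ∀ (F : Set M → Set M), (∀ X X', X ⊆ X' → F X ⊆ F X') →
      F (setLfp F) ⊆ setLfp F := by
    intro F hF a ha X hX
    exact hX (hF _ _ (lfp_le F X hX) ha)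
  intro s Y
  constructor
  · intro hs
    -- A is a prefixed point of fun X => G X Y
    set A : Set M := {t | t ∈ setLfp (fun X => G X (Y ∩ desc R t))} with hA
    have hpre : G A Y ⊆ A := by
      intro t ht
      have ht' : t ∈ G (A ∩ desc R t) (Y ∩ desc R t) := (hdesc t A Y).mp ht
      have hsub : A ∩ desc R t ⊆ setLfp (fun X => G X (Y ∩ desc R t)) := by
        rintro u ⟨huA, hud⟩
        refine lfp_mono _ _ (fun X => hmono X X _ _ (fun x hx => hx)
          (Set.inter_subset_inter_right Y ?_)) huA
        intro v hv
        exact Relation.ReflTransGen.trans hud hv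
      have : t ∈ G (setLfp (fun X => G X (Y ∩ desc R t))) (Y ∩ desc R t) :=
        hmono _ _ _ _ hsub (fun x hx => hx) ht'
      exact lfp_pre (fun X => G X (Y ∩ desc R t))
        (fun X X' hXX' => hmono X X' _ _ hXX' (fun x hx => hx)) this
    exact hs A hpre
  · intro hs
    exact lfp_mono _ _ (fun X => hmono X X _ _ (fun x hx => hx) Set.inter_subset_left) hs
end

section
/- Let F : Set S → Set S be completely additive, s ∈ S, and suppose s ∈ LFP(F). Then there exists a finite set Y = {t₁, ..., t_k} ⊆ S with t_k = s such that s ∈ LFP(F↾Y), where F↾Y(X) := F(X) ∩ Y, and moreover t_{i+1} ∈ (F↾Y)^{i+1}(∅) \ (F↾Y)^i(∅) for each i < k. -/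
def approx {S : Type} (F : Set S → Set S) : ℕ → Set S
  | 0 => ∅
  | n + 1 => F (approx F n)

section Aux

variable {S : Type}

lemma ca_mono_s18 {F : Set S → Set S} (hca : CompletelyAdditive F)
    {A B : Set S} (h : A ⊆ B) : F A ⊆ F B := by
  have key := hca Bool (fun b => if b then B else A)
  have hU : (⋃ b : Bool, if b then B else A) = B := by
    ext x
    simp only [Set.mem_iUnion]
    constructor
    · rintro ⟨b, hb⟩
      cases b
      · simp only [if_neg Bool.false_ne_true] at hb; exact h hb
      · simpa using hb
    · intro hx; exact ⟨true, by simpa using hx⟩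
  rw [hU] at key
  rw [key]
  intro x hx
  exact Set.mem_iUnion.2 ⟨false, by simpa using hx⟩

lemma ca_point {F : Set S → Set S} (hca : CompletelyAdditive F)
    {A : Set S} (hA : A.Nonempty) {x : S} (hx : x ∈ F A) :
    ∃ a ∈ A, x ∈ F {a} := by
  have : Nonempty A := hA.to_subtype
  have key := hca A (fun a => ({a.val} : Set S))
  have hU : (⋃ a : A, ({a.val} : Set S)) = A := by
    ext y; simp
  rw [hU] at key
  rw [key] at hx
  obtain ⟨a, ha⟩ := Set.mem_iUnion.1 hx
  exact ⟨a.1, a.2, ha⟩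

lemma approx_succ_sub {G : Set S → Set S}
    (hmono : ∀ {A B : Set S}, A ⊆ B → G A ⊆ G B) (n : ℕ) :
    approx G n ⊆ approx G (n + 1) := by
  induction n with
  | zero => simp [approx]
  | succ m ih => exact hmono ih

lemma approx_mono_nat {G : Set S → Set S}
    (hmono : ∀ {A B : Set S}, A ⊆ B → G A ⊆ G B) {m n : ℕ} (h : m ≤ n) :
    approx G m ⊆ approx G n := by
  induction n with
  | zero => simp [Nat.le_zero.1 h]
  | succ p ih =>
    rcases Nat.lt_or_ge m (p + 1) with hlt | hge
    · exact (ih (Nat.lt_succ_iff.1 hlt)).trans (approx_succ_sub hmono p)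
    · have : m = p + 1 := le_antisymm h hge
      simp [this]

lemma approx_subset_lfp {G : Set S → Set S}
    (hmono : ∀ {A B : Set S}, A ⊆ B → G A ⊆ G B) (n : ℕ) :
    approx G n ⊆ setLfp G := by
  intro x hx
  intro X hX
  have : ∀ m, approx G m ⊆ X := by
    intro m
    induction m with
    | zero => simp [approx]
    | succ p ih => exact (hmono ih).trans hX
  exact this n hx

lemma lfp_subset_iUnion {F : Set S → Set S} (hca : CompletelyAdditive F) :
    setLfp F ⊆ ⋃ n, approx F n := by
  apply Set.sInter_subset_of_mem
  show F (⋃ n, approx F n) ⊆ ⋃ n, approx F n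
  rw [hca ℕ (fun n => approx F n)]
  intro x hx
  obtain ⟨n, hn⟩ := Set.mem_iUnion.1 hx
  exact Set.mem_iUnion.2 ⟨n + 1, hn⟩

lemma chain_exists {F : Set S → Set S} (hca : CompletelyAdditive F) :
    ∀ k, 1 ≤ k → ∀ s : S, s ∈ approx F k → s ∉ approx F (k - 1) →
      ∃ t : ℕ → S, t k = s ∧
        (∀ i, 1 ≤ i → i ≤ k → t i ∈ approx F i ∧ t i ∉ approx F (i - 1)) ∧
        t 1 ∈ F ∅ ∧ (∀ i, 1 ≤ i → i + 1 ≤ k → t (i + 1) ∈ F {t i}) := by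
  intro k
  induction k with
  | zero => omega
  | succ k ih =>
    intro _ s hs hs'
    by_cases hk : k = 0
    · subst hk
      refine ⟨fun _ => s, rfl, ?_, ?_, ?_⟩
      · intro i h1 h2
        have : i = 1 := by omega
        subst this
        exact ⟨hs, hs'⟩
      · exact hs
      · intro i h1 h2; omega
    · have hk1 : 1 ≤ k := by omega
      -- approx F k is nonempty
      have hne : (approx F k).Nonempty := by
        by_contra hemp
        rw [Set.not_nonempty_iff_eq_empty] at hemp
        have h1 : approx F (k + 1) = approx F 1 := by
          show F (approx F k) = F (approx F 0)
          rw [hemp]; rfl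
        have h2 : approx F 1 ⊆ approx F k := approx_mono_nat (ca_mono_s18 hca) hk1
        rw [h1] at hs
        exact absurd (h2 hs) (by simp [hemp])
      obtain ⟨x, hxk, hsx⟩ := ca_point hca hne hs
      have hx' : x ∉ approx F (k - 1) := by
        intro hmem
        apply hs'
        have : ({x} : Set S) ⊆ approx F (k - 1) := by simpa using hmem
        have : F {x} ⊆ F (approx F (k - 1)) := ca_mono_s18 hca this
        have hk' : F (approx F (k - 1)) = approx F k := by
          have : k - 1 + 1 = k := by omega
          conv_rhs => rw [← this]
          rfl
        simpa [hk'] using this hsx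
      obtain ⟨t, htk, hchain, ht1, hstep⟩ := ih hk1 x hxk hx'
      refine ⟨fun i => if i = k + 1 then s else t i, by simp, ?_, ?_, ?_⟩
      · intro i h1 h2
        by_cases hi : i = k + 1
        · subst hi; simpa using ⟨hs, hs'⟩
        · have hik : i ≤ k := by omega
          simpa [hi] using hchain i h1 hik
      · have : (1 : ℕ) ≠ k + 1 := by omega
        simpa [this, hk] using ht1
      · intro i h1 h2
        by_cases hi : i + 1 = k + 1
        · have : i = k := by omega
          subst this
          have : i ≠ i + 1 := by omega
          simpa [this, htk] using hsx
        · have hik : i + 1 ≤ k := by omega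
          have h3 : i ≠ k + 1 := by omega
          simpa [hi, h3, show i ≠ k by omega] using hstep i h1 hik

end Aux

theorem lfp_restricts_to_finite_set {S : Type} (F : Set S → Set S)
    (hca : CompletelyAdditive F) (s : S) (hs : s ∈ setLfp F) :
    ∃ (k : ℕ) (t : ℕ → S) (Y : Set S), 1 ≤ k ∧ t k = s ∧
      Y = t '' (Set.Icc 1 k) ∧
      s ∈ setLfp (fun X => F X ∩ Y) ∧
      ∀ i < k, t (i + 1) ∈
        approx (fun X => F X ∩ Y) (i + 1) \ approx (fun X => F X ∩ Y) i := by
  classical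
  have hFmono : ∀ {A B : Set S}, A ⊆ B → F A ⊆ F B := fun h => ca_mono_s18 hca h
  have hex : ∃ n, s ∈ approx F n := by
    have := lfp_subset_iUnion hca hs
    exact Set.mem_iUnion.1 this
  set k := Nat.find hex with hkdef
  have hsk : s ∈ approx F k := Nat.find_spec hex
  have hk1 : 1 ≤ k := by
    rcases Nat.eq_zero_or_pos k with h | h
    · rw [h] at hsk; simp [approx] at hsk
    · exact h
  have hsk' : s ∉ approx F (k - 1) := Nat.find_min hex (by omega)
  obtain ⟨t, htk, hchain, ht1, hstep⟩ := chain_exists hca k hk1 s hsk hsk'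
  set Y : Set S := t '' (Set.Icc 1 k) with hY
  set G : Set S → Set S := fun X => F X ∩ Y with hG
  have hGmono : ∀ {A B : Set S}, A ⊆ B → G A ⊆ G B := by
    intro A B h
    exact Set.inter_subset_inter_left Y (hFmono h)
  have htY : ∀ i, 1 ≤ i → i ≤ k → t i ∈ Y :=
    fun i h1 h2 => ⟨i, ⟨h1, h2⟩, rfl⟩
  -- approx G n ⊆ approx F n
  have hGF : ∀ n, approx G n ⊆ approx F n := by
    intro n
    induction n with
    | zero => simp [approx]
    | succ m ih =>
      show G (approx G m) ⊆ F (approx F m)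
      exact (Set.inter_subset_left).trans (hFmono ih)
  -- key membership
  have key : ∀ i, 1 ≤ i → i ≤ k → t i ∈ approx G i := by
    intro i
    induction i with
    | zero => omega
    | succ j ih =>
      intro _ hle
      by_cases hj : j = 0
      · subst hj
        show t 1 ∈ G (approx G 0)
        exact ⟨ht1, htY 1 le_rfl hle⟩
      · have hj1 : 1 ≤ j := by omega
        have hjk : j ≤ k := by omega
        have hIH := ih hj1 hjk
        show t (j + 1) ∈ G (approx G j)
        refine ⟨?_, htY (j + 1) (by omega) hle⟩
        have hsingle : ({t j} : Set S) ⊆ approx G j := by simpa using hIH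
        have : F {t j} ⊆ F (approx G j) := hFmono hsingle
        exact this (hstep j hj1 hle)
  refine ⟨k, t, Y, hk1, htk, rfl, ?_, ?_⟩
  · have : t k ∈ approx G k := key k hk1 le_rfl
    rw [htk] at this
    exact approx_subset_lfp hGmono k this
  · intro i hik
    constructor
    · exact key (i + 1) (by omega) (by omega)
    · intro hmem
      have := hGF i hmem
      have hnot := (hchain (i + 1) (by omega) (by omega)).2
      simp only [Nat.add_sub_cancel] at hnot
      exact hnot this
end

section
/- Let M be a set with binary relation R, and let G : Set M → Set M be monotone and restrict to descendants. For s ∈ M define F_s(X) := G(X ∩ R*[s]) ∩ R*[s]. Then for every t ∈ R*[s] and every n ∈ ℕ: t ∈ G^n(∅) iff t ∈ F_s^n(∅), where the n-th approximants are defined by H^0(∅) = ∅ and H^{n+1}(∅) = H(H^n(∅)). -/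
theorem approximants_restrict_to_descendants {M : Type} (R : M → M → Prop)
    (G : Set M → Set M)
    (hmono : ∀ X Y : Set M, X ⊆ Y → G X ⊆ G Y)
    (hdesc : ∀ (s : M) (X : Set M), s ∈ G X ↔ s ∈ G (X ∩ desc R s)) (s : M) :
    ∀ t ∈ desc R s, ∀ n : ℕ,
      t ∈ approx G n ↔ t ∈ approx (fun X => G (X ∩ desc R s) ∩ desc R s) n := by
  intro t ht n
  induction n generalizing t with
  | zero => simp [approx]
  | succ n ih =>
    have hsub : desc R t ⊆ desc R s := fun u hu => ht.trans hu
    have hset : approx G n ∩ desc R t =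
        (approx (fun X => G (X ∩ desc R s) ∩ desc R s) n ∩ desc R s) ∩ desc R t := by
      ext u
      constructor
      · rintro ⟨hu, hut⟩
        exact ⟨⟨(ih u (hsub hut)).1 hu, hsub hut⟩, hut⟩
      · rintro ⟨⟨hu, _⟩, hut⟩
        exact ⟨(ih u (hsub hut)).2 hu, hut⟩
    show t ∈ G (approx G n) ↔
      t ∈ G (approx (fun X => G (X ∩ desc R s) ∩ desc R s) n ∩ desc R s) ∩ desc R s
    constructor
    · intro h
      refine ⟨?_, ht⟩
      rw [hdesc]
      rw [← hset]
      exact (hdesc t _).1 h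
    · rintro ⟨h, -⟩
      rw [hdesc] at h ⊢
      rw [hset]
      exact h
end
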